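/- arXiv:1808.02755 — 3 statements merged into one kernel-verified Lean document; each statement's English description precedes it below -/
import Mathlib

section
/- Define a sequence s by s(0)=0, s(1)=1 and s(n)=3·s(n−1) − s(n−2) + C(n,2) + 1 for n ≥ 2, where C(n,2) is the binomial coefficient 'n choose 2'. Then for every n ≥ 1, s(n) = Σ_{i=1}^{n} (C(n+1−i, 2) + 1) · F(2i), where F is the Fibonacci sequence. -/
open Finset

def s : ℕ → ℤ
  | 0 => 0
  | 1 => 1
  | (n + 2) => 3 * s (n + 1) - s n + (Nat.choose (n + 2) 2 : ℤ) + 1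

lemma choose_succ_two (m : ℕ) : (Nat.choose (m+1) 2 : ℤ) = Nat.choose m 2 + m := by
  rw [Nat.choose_succ_succ]
  push_cast [Nat.choose_one_right]
  ring

lemma fibZ (m : ℕ) : (Nat.fib (m+2) : ℤ) = Nat.fib (m+1) + Nat.fib m := by
  rw [Nat.fib_add_two]; push_cast; ring

lemma s_closed (n : ℕ) :
    s n = 2 * (Nat.fib (2*n+1) : ℤ) - (Nat.choose (n+1) 2 : ℤ) - 2 := by
  induction n using Nat.strong_induction_on with
  | _ n ih =>
    match n with
    | 0 => simp [s]
    | 1 => simp [s, Nat.fib]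
    | (n+2) =>
      rw [s, ih (n+1) (by omega), ih n (by omega)]
      rw [show 2*(n+2)+1 = (2*n+3)+2 from by ring, show 2*(n+1)+1 = (2*n+1)+2 from by ring,
        fibZ (2*n+3), fibZ (2*n+2), fibZ (2*n+1), fibZ (2*n),
        show 2*n+1 = (2*n)+1 from rfl,
        choose_succ_two (n+2), choose_succ_two (n+1)]
      push_cast
      ring

lemma fib_sum (n : ℕ) :
    ∑ i ∈ Icc 1 n, (Nat.fib (2*i) : ℤ) = (Nat.fib (2*n+1) : ℤ) - 1 := by
  induction n with
  | zero => simp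
  | succ n ih =>
    rw [Finset.sum_Icc_succ_top (by omega), ih]
    rw [show 2*(n+1)+1 = (2*n+1)+2 from by ring, show 2*(n+1) = (2*n)+2 from by ring,
      fibZ (2*n+1), fibZ (2*n), show 2*n+1 = (2*n)+1 from rfl]
    ring

lemma lin_sum (n : ℕ) :
    ∑ i ∈ Icc 1 n, ((n+1-i : ℕ) : ℤ) * (Nat.fib (2*i) : ℤ)
      = (Nat.fib (2*n+2) : ℤ) - 1 - n := by
  induction n with
  | zero => simp
  | succ n ih =>
    have h : ∀ i ∈ Icc 1 (n+1), ((n+1+1-i : ℕ) : ℤ) * (Nat.fib (2*i) : ℤ)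
        = ((n+1-i : ℕ) : ℤ) * (Nat.fib (2*i) : ℤ) + (Nat.fib (2*i) : ℤ) := by
      intro i hi
      simp only [mem_Icc] at hi
      rw [show (n+1+1-i : ℕ) = (n+1-i)+1 from by omega]
      push_cast; ring
    rw [Finset.sum_congr rfl h, Finset.sum_add_distrib, fib_sum (n+1),
      Finset.sum_Icc_succ_top (show 1 ≤ n+1 by omega), Nat.sub_self, ih]
    rw [show 2*(n+1)+2 = (2*n+2)+2 from by ring, show 2*(n+1)+1 = (2*n+1)+2 from by ring,
      fibZ (2*n+2), fibZ (2*n+1), fibZ (2*n), show 2*n+1 = (2*n)+1 from rfl]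
    push_cast; ring

lemma choose_sum (n : ℕ) :
    ∑ i ∈ Icc 1 n, ((Nat.choose (n+1-i) 2 : ℤ)) * (Nat.fib (2*i) : ℤ)
      = (Nat.fib (2*n+1) : ℤ) - (Nat.choose (n+1) 2 : ℤ) - 1 := by
  induction n with
  | zero => simp
  | succ n ih =>
    have h : ∀ i ∈ Icc 1 (n+1), ((Nat.choose (n+1+1-i) 2 : ℤ)) * (Nat.fib (2*i) : ℤ)
        = ((Nat.choose (n+1-i) 2 : ℤ)) * (Nat.fib (2*i) : ℤ)
          + ((n+1-i : ℕ) : ℤ) * (Nat.fib (2*i) : ℤ) := by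
      intro i hi
      simp only [mem_Icc] at hi
      rw [show (n+1+1-i : ℕ) = (n+1-i)+1 from by omega, choose_succ_two]
      ring
    rw [Finset.sum_congr rfl h, Finset.sum_add_distrib,
      Finset.sum_Icc_succ_top (show 1 ≤ n+1 by omega) (f := fun i => ((Nat.choose (n+1-i) 2 : ℤ)) * (Nat.fib (2*i) : ℤ)),
      Finset.sum_Icc_succ_top (show 1 ≤ n+1 by omega) (f := fun i => ((n+1-i : ℕ) : ℤ) * (Nat.fib (2*i) : ℤ)),
      Nat.sub_self, ih, lin_sum, show Nat.choose 0 2 = 0 from rfl]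
    rw [show 2*(n+1)+1 = (2*n+1)+2 from by ring, fibZ (2*n+1),
      show 2*n+2 = (2*n)+2 from by ring, fibZ (2*n), show 2*n+1 = (2*n)+1 from rfl,
      choose_succ_two (n+1)]
    push_cast; ring

theorem s_formula (n : ℕ) (hn : 1 ≤ n) :
    s n = ∑ i ∈ Finset.Icc 1 n,
      ((Nat.choose (n + 1 - i) 2 : ℤ) + 1) * (Nat.fib (2 * i) : ℤ) := by
  have h : ∀ i ∈ Icc 1 n, ((Nat.choose (n+1-i) 2 : ℤ) + 1) * (Nat.fib (2*i) : ℤ)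
      = ((Nat.choose (n+1-i) 2 : ℤ)) * (Nat.fib (2*i) : ℤ) + (Nat.fib (2*i) : ℤ) := by
    intro i _; ring
  rw [Finset.sum_congr rfl h, Finset.sum_add_distrib, choose_sum, fib_sum, s_closed]
  ring
end

section
/- Let R be a square matrix over the reals with nonnegative entries, and let λ be a positive real number strictly greater than the spectral radius of R. Then the matrix λI − R is invertible and all entries of (λI − R)⁻¹ are nonnegative. -/
open Filter

-- entry bound for linfty operator norm
lemma entry_le_linfty {m : ℕ} (M : Matrix (Fin m) (Fin m) ℂ) (i j : Fin m) :
    letI := Matrix.linftyOpNormedRing (n := Fin m) (α := ℂ)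
    ‖M i j‖ ≤ ‖M‖ := by
  letI := Matrix.linftyOpNormedRing (n := Fin m) (α := ℂ)
  have h : ‖M i j‖₊ ≤ ‖M‖₊ := by
    rw [Matrix.linfty_opNNNorm_def]
    exact le_trans (Finset.single_le_sum (f := fun j => ‖M i j‖₊) (fun _ _ => zero_le)
      (Finset.mem_univ j)) (Finset.le_sup (f := fun i => ∑ j, ‖M i j‖₊) (Finset.mem_univ i))
  exact NNReal.coe_le_coe.mpr h

lemma key (m : ℕ) (hm : 0 < m) (x : Matrix (Fin m) (Fin m) ℂ)
    (hx : ∀ μ ∈ spectrum ℂ x, ‖μ‖ < 1) :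
    ∃ r : ℝ, 0 ≤ r ∧ r < 1 ∧ ∀ᶠ n : ℕ in atTop, ∀ i j, ‖(x ^ n) i j‖ ≤ r ^ n := by
  letI := Matrix.linftyOpNormedRing (n := Fin m) (α := ℂ)
  letI := Matrix.linftyOpNormedAlgebra (n := Fin m) (α := ℂ) (R := ℂ)
  haveI : CompleteSpace (Matrix (Fin m) (Fin m) ℂ) := FiniteDimensional.complete ℂ _
  haveI : Nonempty (Fin m) := ⟨⟨0, hm⟩⟩
  haveI : Nontrivial (Matrix (Fin m) (Fin m) ℂ) := Matrix.nonempty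
  have hρ : spectralRadius ℂ x < 1 := by
    have := spectrum.spectralRadius_lt_of_forall_lt (a := x) (r := 1) (fun z hz => by
      simpa [← NNReal.coe_lt_coe, coe_nnnorm] using hx z hz)
    simpa using this
  obtain ⟨p, hρp, hp1⟩ := ENNReal.lt_iff_exists_nnreal_btwn.mp hρ
  have hgel := spectrum.pow_nnnorm_pow_one_div_tendsto_nhds_spectralRadius x
  have hev : ∀ᶠ n : ℕ in atTop, ((‖x ^ n‖₊ : ENNReal)) ^ (1 / (n:ℝ)) < (p : ENNReal) :=
    hgel.eventually_lt_const hρp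
  refine ⟨p, p.coe_nonneg, by exact_mod_cast hp1, ?_⟩
  filter_upwards [hev, eventually_ge_atTop 1] with n hn hn1 i j
  have hne : (n : ℝ) ≠ 0 := by positivity
  have hlt : ((‖x ^ n‖₊ : ENNReal)) < (p : ENNReal) ^ (n : ℝ) := by
    have := ENNReal.rpow_lt_rpow hn (by positivity : (0:ℝ) < (n:ℝ))
    rwa [← ENNReal.rpow_mul,
      one_div, inv_mul_cancel₀ hne, ENNReal.rpow_one] at this
  have hnorm : ‖x ^ n‖ ≤ (p : ℝ) ^ n := by
    rw [← ENNReal.coe_rpow_of_nonneg _ (by positivity), ENNReal.coe_lt_coe] at hlt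
    have := hlt.le
    rw [← NNReal.coe_le_coe] at this
    simpa [← NNReal.coe_rpow, Real.rpow_natCast] using this
  exact le_trans (entry_le_linfty _ i j) hnorm
-- telescoping sum lemma
lemma tsum_telescope {a : ℕ → ℝ} (ha : Summable a) (h0 : Filter.Tendsto a Filter.atTop (nhds 0)) :
    ∑' n, (a n - a (n + 1)) = a 0 := by
  have hs : Summable (fun n => a n - a (n + 1)) :=
    ha.sub ((summable_nat_add_iff 1).mpr ha)
  have h1 := hs.hasSum.tendsto_sum_nat
  have h2 : Filter.Tendsto (fun n => ∑ i ∈ Finset.range n, (a i - a (i + 1)))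
      Filter.atTop (nhds (a 0)) := by
    simp_rw [Finset.sum_range_sub' a]
    simpa using tendsto_const_nhds.sub h0
  exact tendsto_nhds_unique h1 h2

theorem inverse_nonneg (m : ℕ) (R : Matrix (Fin m) (Fin m) ℝ)
    (hR : ∀ i j, 0 ≤ R i j) (lam : ℝ) (hlam : 0 < lam)
    (hspec : ∀ μ : ℂ, μ ∈ spectrum ℂ (R.map (Complex.ofReal)) → ‖μ‖ < lam) :
    IsUnit (lam • (1 : Matrix (Fin m) (Fin m) ℝ) - R) ∧
      ∀ i j, 0 ≤ ((lam • (1 : Matrix (Fin m) (Fin m) ℝ) - R)⁻¹) i j := by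
  rcases Nat.eq_zero_or_pos m with hm | hm
  · subst hm
    haveI : Subsingleton (Matrix (Fin 0) (Fin 0) ℝ) :=
      ⟨fun A B => by ext i j; exact i.elim0⟩
    exact ⟨isUnit_of_subsingleton _, fun i _ => i.elim0⟩
  -- setup
  set B : Matrix (Fin m) (Fin m) ℝ := lam⁻¹ • R with hB
  have hlam' : (lam : ℂ) ≠ 0 := by exact_mod_cast hlam.ne'
  -- the complexified scaled matrix
  set x : Matrix (Fin m) (Fin m) ℂ := ((lam : ℂ))⁻¹ • R.map Complex.ofReal with hxdef
  have hxB : ∀ n : ℕ, x ^ n = (B ^ n).map Complex.ofReal := by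
    have hmap : x = B.map Complex.ofReal := by
      ext i j
      simp [hxdef, hB, Matrix.map_apply, Matrix.smul_apply]
    intro n
    rw [hmap]
    have := (map_pow (Complex.ofRealHom.mapMatrix) B n).symm
    exact this
  -- spectrum of x is inside the open unit disk
  have hx : ∀ μ ∈ spectrum ℂ x, ‖μ‖ < 1 := by
    intro μ hμ
    have hsp := spectrum.unit_smul_eq_smul (R := ℂ) (R.map Complex.ofReal)
      (Units.mk0 ((lam:ℂ))⁻¹ (inv_ne_zero hlam'))
    have hx' : x = (Units.mk0 ((lam:ℂ))⁻¹ (inv_ne_zero hlam')) • R.map Complex.ofReal := rfl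
    rw [hx', hsp] at hμ
    obtain ⟨ν, hν, rfl⟩ := hμ
    have := hspec ν hν
    simp only [Units.smul_def, Units.val_mk0, smul_eq_mul]
    rw [norm_mul, norm_inv, Complex.norm_real, Real.norm_eq_abs, abs_of_pos hlam]
    rw [inv_mul_lt_iff₀ hlam, mul_one]
    exact this
  obtain ⟨r, hr0, hr1, hev⟩ := key m hm x hx
  -- entrywise geometric bound on powers of B
  have hbound : ∀ᶠ n : ℕ in Filter.atTop, ∀ i j, |(B ^ n) i j| ≤ r ^ n := by
    filter_upwards [hev] with n hn i j
    have := hn i j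
    rwa [hxB n, Matrix.map_apply, Complex.norm_real, Real.norm_eq_abs] at this
  have hgeom : Summable fun n : ℕ => r ^ n := summable_geometric_of_lt_one hr0 hr1
  have hsum : ∀ i j, Summable fun n : ℕ => (B ^ n) i j := by
    intro i j
    apply Summable.of_norm_bounded_eventually hgeom
    rw [Nat.cofinite_eq_atTop]
    filter_upwards [hbound] with n hn
    simpa [Real.norm_eq_abs] using hn i j
  have hlim0 : ∀ i j, Filter.Tendsto (fun n : ℕ => (B ^ n) i j) Filter.atTop (nhds 0) := by
    intro i j
    apply squeeze_zero_norm' _ (tendsto_pow_atTop_nhds_zero_of_lt_one (by linarith) hr1)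
    filter_upwards [hbound] with n hn
    simpa [Real.norm_eq_abs] using hn i j
  have hBnn : ∀ n i j, 0 ≤ (B ^ n) i j := by
    intro n
    induction n with
    | zero => intro i j; simp [Matrix.one_apply]; positivity
    | succ n ih =>
        intro i j
        rw [pow_succ, Matrix.mul_apply]
        exact Finset.sum_nonneg fun k _ => mul_nonneg (ih i k)
          (mul_nonneg (inv_nonneg.mpr hlam.le) (hR k j))
  -- the candidate inverse
  set S : Matrix (Fin m) (Fin m) ℝ := Matrix.of fun i j => ∑' n : ℕ, (B ^ n) i j with hS
  have key_entry : ∀ i j, ∑' n : ℕ, ((B ^ n) i j - (B ^ (n+1)) i j) = (1 : Matrix (Fin m) (Fin m) ℝ) i j := by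
    intro i j
    rw [tsum_telescope (hsum i j) (hlim0 i j)]
    simp [Matrix.one_apply]
  have mul1 : (1 - B) * S = 1 := by
    ext i j
    rw [Matrix.mul_apply]
    have step1 : ∀ k, (1 - B) i k * S k j = ∑' n : ℕ, (1 - B) i k * (B ^ n) k j := by
      intro k; rw [hS]; exact (tsum_mul_left).symm
    simp_rw [step1]
    rw [← Summable.tsum_finsetSum (fun k _ => (hsum k j).mul_left _)]
    have : ∀ n : ℕ, (∑ k, (1 - B) i k * (B ^ n) k j) = (B ^ n) i j - (B ^ (n+1)) i j := by
      intro n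
      rw [← Matrix.mul_apply, sub_mul, one_mul, ← pow_succ']
      simp [Matrix.sub_apply]
    simp_rw [this]
    exact key_entry i j
  have mul2 : S * (1 - B) = 1 := by
    ext i j
    rw [Matrix.mul_apply]
    have step1 : ∀ k, S i k * (1 - B) k j = ∑' n : ℕ, (B ^ n) i k * (1 - B) k j := by
      intro k; rw [hS]; exact (tsum_mul_right).symm
    simp_rw [step1]
    rw [← Summable.tsum_finsetSum (fun k _ => (hsum i k).mul_right _)]
    have : ∀ n : ℕ, (∑ k, (B ^ n) i k * (1 - B) k j) = (B ^ n) i j - (B ^ (n+1)) i j := by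
      intro n
      rw [← Matrix.mul_apply, mul_sub, mul_one, ← pow_succ]
      simp [Matrix.sub_apply]
    simp_rw [this]
    exact key_entry i j
  -- assemble
  have hM : lam • (1 : Matrix (Fin m) (Fin m) ℝ) - R = lam • (1 - B) := by
    rw [smul_sub, hB, smul_smul, mul_inv_cancel₀ hlam.ne', one_smul]
  set T : Matrix (Fin m) (Fin m) ℝ := lam⁻¹ • S with hT
  have mulMT : (lam • (1 : Matrix (Fin m) (Fin m) ℝ) - R) * T = 1 := by
    rw [hM, hT, smul_mul_assoc, Matrix.mul_smul, smul_smul, mul_inv_cancel₀ hlam.ne',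
      one_smul, mul1]
  have hunit : IsUnit (lam • (1 : Matrix (Fin m) (Fin m) ℝ) - R) := by
    rw [Matrix.isUnit_iff_isUnit_det]
    have : (lam • (1 : Matrix (Fin m) (Fin m) ℝ) - R).det * T.det = 1 := by
      rw [← Matrix.det_mul, mulMT, Matrix.det_one]
    exact IsUnit.of_mul_eq_one _ this
  refine ⟨hunit, ?_⟩
  have hinv : (lam • (1 : Matrix (Fin m) (Fin m) ℝ) - R)⁻¹ = T :=
    Matrix.inv_eq_right_inv mulMT
  intro i j
  rw [hinv, hT]
  have : 0 ≤ S i j := by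
    rw [hS]
    exact tsum_nonneg fun n => hBnn n i j
  simpa [Matrix.smul_apply] using mul_nonneg (inv_nonneg.mpr hlam.le) this
end

section
/- Let R₂ be the 4×4 matrix with rows (1,0,1,0), (1,0,0,0), (0,0,0,1), (0,1,0,1). Then the golden ratio φ = (1+√5)/2 is an eigenvalue of R₂, and the row vector v = (φ, 1, 1, φ) satisfies v·R₂ = φ·v. -/
noncomputable def R₂ : Matrix (Fin 4) (Fin 4) ℝ :=
  !![1, 0, 1, 0; 1, 0, 0, 0; 0, 0, 0, 1; 0, 1, 0, 1]

noncomputable def φ : ℝ := (1 + Real.sqrt 5) / 2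

lemma phi_sq : φ ^ 2 = φ + 1 := by
  have h5 : Real.sqrt 5 ^ 2 = 5 := Real.sq_sqrt (by norm_num)
  unfold φ
  nlinarith [h5]

theorem golden_ratio_eigenvalue :
    φ ∈ spectrum ℝ R₂ ∧
      Matrix.vecMul ![φ, 1, 1, φ] R₂ = φ • ![φ, 1, 1, φ] := by
  constructor
  · rw [spectrum.mem_iff, Matrix.isUnit_iff_isUnit_det]
    rw [isUnit_iff_ne_zero]
    push_neg
    have : ((algebraMap ℝ (Matrix (Fin 4) (Fin 4) ℝ)) φ - R₂) =
        !![φ - 1, 0, -1, 0; -1, φ, 0, 0; 0, 0, φ, -1; 0, -1, 0, φ - 1] := by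
      rw [Matrix.algebraMap_eq_diagonal]
      ext i j
      fin_cases i <;> fin_cases j <;>
        simp [R₂, Matrix.diagonal, Matrix.vecHead, Matrix.vecTail] <;> ring
    rw [this]
    rw [Matrix.det_succ_row_zero]
    simp [Fin.sum_univ_four, Matrix.det_fin_three, Fin.succAbove, Matrix.submatrix]
    nlinarith [phi_sq]
  · ext j
    fin_cases j <;>
      simp [R₂, Matrix.vecMul, dotProduct, Fin.sum_univ_four, Matrix.vecHead, Matrix.vecTail] <;>
      nlinarith [phi_sq]
end
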